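/- Let α ∈ Σ^k, ℓ, r ∈ ℕ, u a word, and suppose w ∈ H_α*(L_α,ℓ,r) ∩ u·α·Σ*·ᾱ·ū. Let x₁,…,x_m ∈ P_α(uα,ℓ) and y₁,…,y_n ∈ P_α(uα,r) (with n ≥ 1), and assume either m = 0 or |y_j| ≤ |x_m| for all 1 ≤ j ≤ n. Then x_m⋯x₁·w·ȳ₁⋯ȳ_n ∈ H_α*(L_α,ℓ,r). -/

import Mathlib

open Computability

/-- Reverse-complement of a word under the involution `bar`. -/
def wbar {S : Type} (bar : S → S) (w : List S) : List S := (w.map bar).reverse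

/-- The set of `α`-prefixes of `w` of length at most `ℓ`. -/
def Pa {S : Type} (α w : List S) (ℓ : ℕ) : Language S :=
  {v | v ++ α <+: w ∧ v.length ≤ ℓ}

/-- `α Σ* ᾱ` : words with prefix `α` and suffix `ᾱ`. -/
def Dom {S : Type} (bar : S → S) (α : List S) : Language S :=
  {z | ∃ β, z = α ++ β ++ wbar bar α}

/-- One-step parameterized hairpin completion with binding word `α`,
left bound `ℓ`, right bound `r`. -/
def HaP {S : Type} (bar : S → S) (α : List S) (ℓ r : ℕ) (L : Language S) : Language S :=
  {z | ∃ γ β, γ.length ≤ ℓ ∧ z = γ ++ α ++ β ++ wbar bar α ++ wbar bar γ ∧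
      α ++ β ++ wbar bar α ++ wbar bar γ ∈ L} ⊔
  {z | ∃ γ β, γ.length ≤ r ∧ z = γ ++ α ++ β ++ wbar bar α ++ wbar bar γ ∧
      γ ++ α ++ β ++ wbar bar α ∈ L}

/-- One-step parameterized hairpin completion `H_k(L,ℓ,r)`. -/
def HkP {S : Type} (bar : S → S) (k ℓ r : ℕ) (L : Language S) : Language S :=
  {z | ∃ α : List S, α.length = k ∧ z ∈ HaP bar α ℓ r L}

def HaIter {S : Type} (bar : S → S) (α : List S) (ℓ r : ℕ) (L : Language S) : ℕ → Language S
  | 0 => L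
  | n + 1 => HaP bar α ℓ r (HaIter bar α ℓ r L n)

/-- Iterated parameterized hairpin completion `H_α*(L,ℓ,r)`. -/
def HaStar {S : Type} (bar : S → S) (α : List S) (ℓ r : ℕ) (L : Language S) : Language S :=
  {z | ∃ n, z ∈ HaIter bar α ℓ r L n}

def HkIter {S : Type} (bar : S → S) (k ℓ r : ℕ) (L : Language S) : ℕ → Language S
  | 0 => L
  | n + 1 => HkP bar k ℓ r (HkIter bar k ℓ r L n)

/-- Iterated parameterized hairpin completion `H_k*(L,ℓ,r)`. -/
def HkStar {S : Type} (bar : S → S) (k ℓ r : ℕ) (L : Language S) : Language S :=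
  {z | ∃ n, z ∈ HkIter bar k ℓ r L n}

/-- Unbounded two-sided hairpin completion `H_k(L)`. -/
def HU {S : Type} (bar : S → S) (k : ℕ) (L : Language S) : Language S :=
  {z | ∃ γ α β, α.length = k ∧ z = γ ++ α ++ β ++ wbar bar α ++ wbar bar γ ∧
      (α ++ β ++ wbar bar α ++ wbar bar γ ∈ L ∨ γ ++ α ++ β ++ wbar bar α ∈ L)}

/-- Unbounded right-sided hairpin completion `RH_k(L)`. -/
def RHU {S : Type} (bar : S → S) (k : ℕ) (L : Language S) : Language S :=
  {z | ∃ γ α β, α.length = k ∧ z = γ ++ α ++ β ++ wbar bar α ++ wbar bar γ ∧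
      γ ++ α ++ β ++ wbar bar α ∈ L}

def HUIter {S : Type} (bar : S → S) (k : ℕ) (L : Language S) : ℕ → Language S
  | 0 => L
  | n + 1 => HU bar k (HUIter bar k L n)

/-- Iterated unbounded two-sided hairpin completion `H_k*(L)`. -/
def HUStar {S : Type} (bar : S → S) (k : ℕ) (L : Language S) : Language S :=
  {z | ∃ n, z ∈ HUIter bar k L n}

def RHUIter {S : Type} (bar : S → S) (k : ℕ) (L : Language S) : ℕ → Language S
  | 0 => L
  | n + 1 => RHU bar k (RHUIter bar k L n)

/-- Iterated unbounded right-sided hairpin completion `RH_k*(L)`. -/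
def RHUStar {S : Type} (bar : S → S) (k : ℕ) (L : Language S) : Language S :=
  {z | ∃ n, z ∈ RHUIter bar k L n}

/-- Image of a language under reverse-complement. -/
def barSet {S : Type} (bar : S → S) (A : Language S) : Language S := wbar bar '' A

namespace HairpinAux

variable {S : Type}

lemma wbar_append (bar : S → S) (a b : List S) :
    wbar bar (a ++ b) = wbar bar b ++ wbar bar a := by
  simp [wbar]

lemma wbar_length (bar : S → S) (a : List S) : (wbar bar a).length = a.length := by
  simp [wbar]

lemma wbar_wbar (bar : S → S) (hbar : ∀ a, bar (bar a) = a) (a : List S) :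
    wbar bar (wbar bar a) = a := by
  have h : bar ∘ bar = id := funext hbar
  simp [wbar, List.map_map, h]

lemma wbar_suffix_of_prefix (bar : S → S) {a b : List S} (h : a <+: b) :
    wbar bar a <:+ wbar bar b := by
  obtain ⟨t, rfl⟩ := h
  exact ⟨wbar bar t, (wbar_append bar a t).symm⟩

/-- Every word derivable in `n` steps has the form `v α δ ᾱ v̄` with `α <+: v ++ α`. -/
lemma good_iter (bar : S → S) (hbar : ∀ a, bar (bar a) = a)
    (α : List S) (ℓ r : ℕ) (Lα : Language S) (hL : Lα ≤ Dom bar α) :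
    ∀ n z, z ∈ HaIter bar α ℓ r Lα n →
      ∃ v δ, z = v ++ α ++ δ ++ wbar bar α ++ wbar bar v ∧ α <+: v ++ α := by
  intro n
  induction n with
  | zero =>
    intro z hz
    obtain ⟨β, rfl⟩ := hL hz
    exact ⟨[], β, by simp [wbar], by simp⟩
  | succ n ih =>
    intro z hz
    rcases hz with ⟨γ, β, hγ, rfl, hold⟩ | ⟨γ, β, hγ, rfl, hold⟩
    · -- left step
      obtain ⟨v, δ, hform, hv⟩ := ih _ hold
      have key1 : wbar bar (α ++ β ++ wbar bar α ++ wbar bar γ)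
          = γ ++ (α ++ (wbar bar β ++ wbar bar α)) := by
        simp [wbar_append, wbar_wbar bar hbar, List.append_assoc]
      have key2 : wbar bar (α ++ β ++ wbar bar α ++ wbar bar γ)
          = v ++ (α ++ (wbar bar δ ++ wbar bar α ++ wbar bar v)) := by
        rw [hform]
        simp [wbar_append, wbar_wbar bar hbar, List.append_assoc]
      have h1 : γ ++ α <+: wbar bar (α ++ β ++ wbar bar α ++ wbar bar γ) :=
        ⟨wbar bar β ++ wbar bar α, by rw [key1]; simp [List.append_assoc]⟩
      have h2 : v ++ α <+: wbar bar (α ++ β ++ wbar bar α ++ wbar bar γ) :=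
        ⟨wbar bar δ ++ wbar bar α ++ wbar bar v, by rw [key2]; simp [List.append_assoc]⟩
      have h3 : α <+: wbar bar (α ++ β ++ wbar bar α ++ wbar bar γ) := hv.trans h2
      exact ⟨γ, β, rfl, List.prefix_of_prefix_length_le h3 h1 (by simp)⟩
    · -- right step
      obtain ⟨v, δ, hform, hv⟩ := ih _ hold
      have h1 : γ ++ α <+: γ ++ α ++ β ++ wbar bar α :=
        ⟨β ++ wbar bar α, by simp [List.append_assoc]⟩
      have h2 : v ++ α <+: γ ++ α ++ β ++ wbar bar α := by
        rw [hform]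
        exact ⟨δ ++ wbar bar α ++ wbar bar v, by simp [List.append_assoc]⟩
      have h3 : α <+: γ ++ α ++ β ++ wbar bar α := hv.trans h2
      exact ⟨γ, β, rfl, List.prefix_of_prefix_length_le h3 h1 (by simp)⟩

/-- Chain of left steps. -/
lemma prepend_chain (bar : S → S) (α u : List S) (ℓ r : ℕ) (Lα : Language S)
    (hu : α <+: u ++ α) :
    ∀ (xs : List (List S)) (Z mid : List S) (n : ℕ),
      (∀ x ∈ xs, x ++ α <+: u ++ α ∧ x.length ≤ ℓ) →
      Z = α ++ mid ++ wbar bar (u ++ α) →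
      Z ∈ HaIter bar α ℓ r Lα n →
      ∃ n' mid', xs.reverse.flatten ++ Z = α ++ mid' ++ wbar bar (u ++ α) ∧
        xs.reverse.flatten ++ Z ∈ HaIter bar α ℓ r Lα n' := by
  intro xs
  induction xs with
  | nil =>
    intro Z mid n _ hZ hZn
    exact ⟨n, mid, by simpa using hZ, by simpa using hZn⟩
  | cons x xs ih =>
    intro Z mid n hxs hZ hZn
    obtain ⟨hxpre, hxlen⟩ := hxs x (List.mem_cons_self ..)
    obtain ⟨s, hs⟩ := wbar_suffix_of_prefix bar hxpre
    have hdecomp : Z = α ++ (mid ++ s) ++ wbar bar α ++ wbar bar x := by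
      rw [hZ, ← hs, wbar_append]
      simp [List.append_assoc]
    have hstep : x ++ Z ∈ HaIter bar α ℓ r Lα (n + 1) :=
      Or.inl ⟨x, mid ++ s, hxlen, by rw [hdecomp]; simp [List.append_assoc],
        hdecomp ▸ hZn⟩
    have hxa : α <+: x ++ α :=
      List.prefix_of_prefix_length_le hu hxpre (by simp)
    obtain ⟨e, he⟩ := hxa
    have hform' : x ++ Z = α ++ (e ++ mid) ++ wbar bar (u ++ α) := by
      rw [hZ, show x ++ (α ++ mid ++ wbar bar (u ++ α))
          = (x ++ α) ++ (mid ++ wbar bar (u ++ α)) from by simp [List.append_assoc],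
        ← he]
      simp [List.append_assoc]
    obtain ⟨n', mid', h1, h2⟩ := ih (x ++ Z) (e ++ mid) (n + 1)
      (fun x' hx' => hxs x' (List.mem_cons_of_mem _ hx')) hform' hstep
    have hflat : (x :: xs).reverse.flatten ++ Z = xs.reverse.flatten ++ (x ++ Z) := by
      simp [List.append_assoc]
    exact ⟨n', mid', by rw [hflat]; exact h1, by rw [hflat]; exact h2⟩

/-- Chain of right steps. -/
lemma append_chain (bar : S → S) (hbar : ∀ a, bar (bar a) = a)
    (α u : List S) (ℓ r : ℕ) (Lα : Language S)
    (hu : α <+: u ++ α) :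
    ∀ (ys : List (List S)) (Z c pre : List S) (n : ℕ),
      (∀ y ∈ ys, y ++ α <+: u ++ α ∧ y.length ≤ r) →
      (∀ y ∈ ys, y ++ α <+: Z) →
      Z = pre ++ wbar bar (c ++ α) →
      α <+: c ++ α →
      u.length + α.length + α.length ≤ Z.length →
      Z ∈ HaIter bar α ℓ r Lα n →
      ∃ n', Z ++ (ys.map (wbar bar)).flatten ∈ HaIter bar α ℓ r Lα n' := by
  intro ys
  induction ys with
  | nil =>
    intro Z c pre n _ _ _ _ _ hZn
    exact ⟨n, by simpa using hZn⟩
  | cons y ys ih =>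
    intro Z c pre n hys hpre hZform hc hlen hZn
    obtain ⟨hyu, hyr⟩ := hys y (List.mem_cons_self ..)
    obtain ⟨t, ht⟩ := hpre y (List.mem_cons_self ..)
    have hαZ : wbar bar α <:+ Z := by
      rw [hZform]
      exact (wbar_suffix_of_prefix bar hc).trans ⟨pre, rfl⟩
    have hylen : y.length ≤ u.length := by
      have := hyu.length_le
      simp only [List.length_append] at this
      omega
    have htlen : α.length ≤ t.length := by
      have h2 : Z.length = y.length + α.length + t.length := by
        rw [← ht]; simp; omega
      omega
    have hαt : wbar bar α <:+ t :=
      List.suffix_of_suffix_length_le hαZ ⟨y ++ α, ht⟩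
        (by rw [wbar_length]; exact htlen)
    obtain ⟨β₂, hβ₂⟩ := hαt
    have hZdec : Z = y ++ α ++ β₂ ++ wbar bar α := by
      rw [← ht, ← hβ₂]; simp [List.append_assoc]
    have hstep : Z ++ wbar bar y ∈ HaIter bar α ℓ r Lα (n + 1) :=
      Or.inr ⟨y, β₂, hyr, by rw [hZdec], hZdec ▸ hZn⟩
    have hya : α <+: y ++ α :=
      List.prefix_of_prefix_length_le hu hyu (by simp)
    obtain ⟨e, he⟩ := hya
    obtain ⟨f, hf⟩ := hc
    have hc' : α <+: (y ++ c) ++ α :=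
      ⟨e ++ f, by
        rw [show α ++ (e ++ f) = (α ++ e) ++ f from (List.append_assoc ..).symm, he,
          List.append_assoc, hf]
        simp [List.append_assoc]⟩
    have hZform' : Z ++ wbar bar y = pre ++ wbar bar ((y ++ c) ++ α) := by
      rw [show (y ++ c) ++ α = y ++ (c ++ α) from by simp [List.append_assoc],
        wbar_append, hZform]
      simp [List.append_assoc]
    have hpre' : ∀ y' ∈ ys, y' ++ α <+: Z ++ wbar bar y :=
      fun y' hy' => (hpre y' (List.mem_cons_of_mem _ hy')).trans ⟨wbar bar y, rfl⟩
    have hlen' : u.length + α.length + α.length ≤ (Z ++ wbar bar y).length :=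
      le_trans hlen (by simp)
    obtain ⟨n', hfin⟩ := ih (Z ++ wbar bar y) (y ++ c) pre (n + 1)
      (fun y' hy' => hys y' (List.mem_cons_of_mem _ hy')) hpre' hZform' hc' hlen' hstep
    exact ⟨n', by simpa [List.append_assoc] using hfin⟩

end HairpinAux

open HairpinAux

/-- Appending `x_m ⋯ x₁` on the left and `ȳ₁ ⋯ ȳ_n` on the right of
`w ∈ H_α*(L_α,ℓ,r) ∩ uαΣ*ᾱū`, with `x_i ∈ P_α(uα,ℓ)`, `y_j ∈ P_α(uα,r)`,
`n ≥ 1`, and `m = 0` or `|y_j| ≤ |x_m|` for all `j`, stays in `H_α*(L_α,ℓ,r)`. -/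
theorem extend_mem_HaStar {S : Type} (bar : S → S)
    (hbar : ∀ a, bar (bar a) = a) (k ℓ r : ℕ)
    (α u : List S) (hα : α.length = k)
    (Lα : Language S) (hL : Lα ≤ Dom bar α)
    (w : List S) (hw : w ∈ HaStar bar α ℓ r Lα)
    (hwform : ∃ β, w = u ++ α ++ β ++ wbar bar α ++ wbar bar u)
    (xs ys : List (List S))
    (hxs : ∀ x ∈ xs, x ∈ Pa α (u ++ α) ℓ)
    (hys : ∀ y ∈ ys, y ∈ Pa α (u ++ α) r)
    (hn : ys ≠ [])
    (hlast : xs = [] ∨ ∃ xm, xs.getLast? = some xm ∧ ∀ y ∈ ys, y.length ≤ xm.length) :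
    xs.reverse.flatten ++ w ++ (ys.map (wbar bar)).flatten ∈ HaStar bar α ℓ r Lα := by
  obtain ⟨n₀, hw₀⟩ := hw
  obtain ⟨β, hwβ⟩ := hwform
  obtain ⟨v, δ, hform, hv⟩ := good_iter bar hbar α ℓ r Lα hL n₀ w hw₀
  have huw : u ++ α <+: w :=
    ⟨β ++ wbar bar α ++ wbar bar u, by rw [hwβ]; simp [List.append_assoc]⟩
  have hvw : v ++ α <+: w :=
    ⟨δ ++ wbar bar α ++ wbar bar v, by rw [hform]; simp [List.append_assoc]⟩
  have hαw : α <+: w := hv.trans hvw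
  have hu : α <+: u ++ α := List.prefix_of_prefix_length_le hαw huw (by simp)
  obtain ⟨e₀, he₀⟩ := hu
  have hwsuf : w = (u ++ α ++ β) ++ wbar bar (u ++ α) := by
    rw [hwβ, wbar_append]; simp [List.append_assoc]
  have hwdec : w = α ++ (e₀ ++ β) ++ wbar bar (u ++ α) := by
    rw [hwsuf, show u ++ α ++ β = (u ++ α) ++ β from rfl, ← he₀]
    simp [List.append_assoc]
  have hyss : ∀ y ∈ ys, y ++ α <+: u ++ α ∧ y.length ≤ r := fun y hy => hys y hy
  rcases hlast with rfl | ⟨xm, hxm?, hym⟩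
  · -- no x's
    have hlen₀ : u.length + α.length + α.length ≤ w.length := by
      rw [hwβ]; simp [wbar_length]; omega
    have hpre₀ : ∀ y ∈ ys, y ++ α <+: w := fun y hy => ((hys y hy).1).trans huw
    obtain ⟨n', hfin⟩ := append_chain bar hbar α u ℓ r Lα ⟨e₀, he₀⟩ ys w u
      (u ++ α ++ β) n₀ hyss hpre₀ hwsuf ⟨e₀, he₀⟩ hlen₀ hw₀
    exact ⟨n', by simpa using hfin⟩
  · -- at least one x, last one is xm
    have hne : xs ≠ [] := by rintro rfl; simp at hxm?
    have hxmval : xs.getLast hne = xm := by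
      have := List.getLast?_eq_getLast hne
      rw [hxm?] at this
      exact (Option.some_injective _ this.symm)
    have hxm_mem : xm ∈ xs := hxmval ▸ List.getLast_mem hne
    obtain ⟨hxmu, hxml⟩ := hxs xm hxm_mem
    obtain ⟨n₁, mid₁, hR, hRmem⟩ := prepend_chain bar α u ℓ r Lα ⟨e₀, he₀⟩
      xs.dropLast w (e₀ ++ β) n₀
      (fun x' hx' => hxs x' ((List.dropLast_prefix xs).subset hx')) hwdec hw₀
    set R := xs.dropLast.reverse.flatten ++ w with hRdef
    obtain ⟨s, hs⟩ := wbar_suffix_of_prefix bar hxmu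
    have hRdec : R = α ++ (mid₁ ++ s) ++ wbar bar α ++ wbar bar xm := by
      rw [hR, ← hs, wbar_append]
      simp [List.append_assoc]
    have hstep : xm ++ R ∈ HaIter bar α ℓ r Lα (n₁ + 1) :=
      Or.inl ⟨xm, mid₁ ++ s, hxml, by rw [hRdec]; simp [List.append_assoc],
        hRdec ▸ hRmem⟩
    have hZ₀eq : xs.reverse.flatten ++ w = xm ++ R := by
      conv_lhs => rw [← List.dropLast_append_getLast hne, hxmval]
      simp [List.append_assoc]
      rfl
    have hZ₀form : xm ++ R = (xm ++ α ++ mid₁) ++ wbar bar (u ++ α) := by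
      rw [hR]; simp [List.append_assoc]
    have hpre₀ : ∀ y ∈ ys, y ++ α <+: xm ++ R := by
      intro y hy
      have h1 : y ++ α <+: xm ++ α :=
        List.prefix_of_prefix_length_le (hys y hy).1 hxmu (by simp [hym y hy])
      have h2 : xm ++ α <+: xm ++ R :=
        ⟨mid₁ ++ wbar bar (u ++ α), by rw [hR]; simp [List.append_assoc]⟩
      exact h1.trans h2
    have hlen₀ : u.length + α.length + α.length ≤ (xm ++ R).length := by
      rw [hZ₀form]
      simp [wbar_length]
      omega
    obtain ⟨n', hfin⟩ := append_chain bar hbar α u ℓ r Lα ⟨e₀, he₀⟩ ys (xm ++ R) u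
      (xm ++ α ++ mid₁) (n₁ + 1) hyss hpre₀ hZ₀form ⟨e₀, he₀⟩ hlen₀ hstep
    rw [hZ₀eq]
    exact ⟨n', hfin⟩
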